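/- Let χ ∈ C³(Ω,ℝ), let W ∈ C³(Ω,ℂ) satisfy ∂_z̄ W = (∂_z̄ χ)·conj(W), and set W̊ = ∂_z W − (∂_z χ)·conj(W). Then the vector Φ = (Im W̊, Re W̊)ᵀ satisfies H^{(1)} Φ = 0, where H^{(1)} is the 2×2 matrix operator with entries H^{(1)}_{ij} = δ_{ij}(−Δ + Σ_k((∂_kχ)² − ∂_k²χ)) + 2∂_i∂_jχ. -/

import Mathlib

noncomputable section
open Complex

/-- ∂_x of a complex-valued function on ℂ ≅ ℝ². -/
def dx (w : ℂ → ℂ) : ℂ → ℂ := fun z => fderiv ℝ w z 1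

/-- ∂_y of a complex-valued function on ℂ ≅ ℝ². -/
def dy (w : ℂ → ℂ) : ℂ → ℂ := fun z => fderiv ℝ w z Complex.I

/-- ∂_z = (∂_x - i∂_y)/2. -/
def dz (w : ℂ → ℂ) : ℂ → ℂ := fun z => (dx w z - Complex.I * dy w z) / 2

/-- ∂_z̄ = (∂_x + i∂_y)/2. -/
def dzb (w : ℂ → ℂ) : ℂ → ℂ := fun z => (dx w z + Complex.I * dy w z) / 2

/-- A real-valued function viewed as complex-valued. -/
def cc (χ : ℂ → ℝ) : ℂ → ℂ := fun z => (χ z : ℂ)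

/-- V = ∂_z̄ - (∂_z̄χ)·C. -/
def Vop (χ : ℂ → ℝ) (w : ℂ → ℂ) : ℂ → ℂ :=
  fun z => dzb w z - dzb (cc χ) z * (starRingEnd ℂ) (w z)

/-- V̄ = ∂_z - (∂_zχ)·C. -/
def Vbar (χ : ℂ → ℝ) (w : ℂ → ℂ) : ℂ → ℂ :=
  fun z => dz w z - dz (cc χ) z * (starRingEnd ℂ) (w z)

/-- V₁ = ∂_z̄ + (∂_zχ)·C. -/
def V1 (χ : ℂ → ℝ) (w : ℂ → ℂ) : ℂ → ℂ :=
  fun z => dzb w z + dz (cc χ) z * (starRingEnd ℂ) (w z)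

/-- V̄₁ = ∂_z + (∂_z̄χ)·C. -/
def Vbar1 (χ : ℂ → ℝ) (w : ℂ → ℂ) : ℂ → ℂ :=
  fun z => dz w z + dzb (cc χ) z * (starRingEnd ℂ) (w z)

/-- Partial derivative ∂_i of a real-valued function on ℂ ≅ ℝ². -/
def pdc (i : Fin 2) (f : ℂ → ℝ) : ℂ → ℝ :=
  fun z => fderiv ℝ f z (if i = 0 then 1 else Complex.I)

/-- H^{(0)} = -Δ + Σ_k ((∂_kχ)² - ∂_k²χ) acting on real functions on ℂ. -/
def H0c (χ f : ℂ → ℝ) : ℂ → ℝ := fun z =>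
  -(pdc 0 (pdc 0 f) z + pdc 1 (pdc 1 f) z) +
    (∑ k : Fin 2, ((pdc k χ z) ^ 2 - pdc k (pdc k χ) z)) * f z

/-- H^{(2)} = -Δ + Σ_k ((∂_kχ)² + ∂_k²χ). -/
def H2c (χ f : ℂ → ℝ) : ℂ → ℝ := fun z =>
  -(pdc 0 (pdc 0 f) z + pdc 1 (pdc 1 f) z) +
    (∑ k : Fin 2, ((pdc k χ z) ^ 2 + pdc k (pdc k χ) z)) * f z

/-- H^{(1)}_{ij} = δ_{ij} H^{(0)} + 2∂_i∂_jχ. -/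
def H1c (χ : ℂ → ℝ) (i j : Fin 2) (f : ℂ → ℝ) : ℂ → ℝ := fun z =>
  (if i = j then H0c χ f z else 0) + 2 * pdc i (pdc j χ) z * f z

/-! ### Auxiliary derivative toolkit -/

section Kit
variable {F : Type*} [NormedAddCommGroup F] [NormedSpace ℝ F]

/-- Directional derivative operator. -/
def Dg (v : ℂ) (f : ℂ → F) : ℂ → F := fun z => fderiv ℝ f z v

lemma Dg_congr {s : Set ℂ} {f g : ℂ → F} {z : ℂ} (h : Set.EqOn f g s) (hs : IsOpen s)
    (hz : z ∈ s) (v : ℂ) : Dg v f z = Dg v g z := by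
  unfold Dg
  rw [Filter.EventuallyEq.fderiv_eq (Filter.eventuallyEq_of_mem (hs.mem_nhds hz) h)]

lemma Dg_add {f g : ℂ → F} {z : ℂ} (hf : DifferentiableAt ℝ f z) (hg : DifferentiableAt ℝ g z)
    (v : ℂ) : Dg v (fun t => f t + g t) z = Dg v f z + Dg v g z := by
  unfold Dg; rw [fderiv_fun_add hf hg]; simp

lemma Dg_sub {f g : ℂ → F} {z : ℂ} (hf : DifferentiableAt ℝ f z) (hg : DifferentiableAt ℝ g z)
    (v : ℂ) : Dg v (fun t => f t - g t) z = Dg v f z - Dg v g z := by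
  unfold Dg; rw [fderiv_fun_sub hf hg]; simp

lemma Dg_const_mul {f : ℂ → ℂ} {z : ℂ} (hf : DifferentiableAt ℝ f z) (c v : ℂ) :
    Dg v (fun t => c * f t) z = c * Dg v f z := by
  unfold Dg; rw [fderiv_const_mul hf]; simp

lemma Dg_div_const {f : ℂ → ℂ} {z : ℂ} (hf : DifferentiableAt ℝ f z) (c v : ℂ) :
    Dg v (fun t => f t / c) z = Dg v f z / c := by
  have h : (fun t => f t / c) = fun t => c⁻¹ * f t := by funext t; rw [div_eq_inv_mul]
  rw [h, Dg_const_mul hf, div_eq_inv_mul]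

lemma Dg_mul {f g : ℂ → ℂ} {z : ℂ} (hf : DifferentiableAt ℝ f z) (hg : DifferentiableAt ℝ g z)
    (v : ℂ) : Dg v (fun t => f t * g t) z = Dg v f z * g z + f z * Dg v g z := by
  unfold Dg; rw [fderiv_fun_mul hf hg]; simp; ring

lemma Dg_conj {f : ℂ → ℂ} {z : ℂ} (v : ℂ) :
    Dg v (fun t => (starRingEnd ℂ) (f t)) z = (starRingEnd ℂ) (Dg v f z) := by
  unfold Dg
  have h : (fun t => (starRingEnd ℂ) (f t)) = (⇑(Complex.conjCLE) ∘ f) := rfl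
  rw [h, ContinuousLinearEquiv.comp_fderiv]
  simp

lemma Dg_ofReal {r : ℂ → ℝ} {z : ℂ} (hr : DifferentiableAt ℝ r z) (v : ℂ) :
    Dg v (fun t => ((r t : ℝ) : ℂ)) z = ((Dg v r z : ℝ) : ℂ) := by
  unfold Dg
  have h := (Complex.ofRealCLM.hasFDerivAt.comp z hr.hasFDerivAt).fderiv
  have h2 : (fun t => ((r t : ℝ) : ℂ)) = (⇑Complex.ofRealCLM ∘ r) := rfl
  rw [h2, h]; simp

lemma Dg_im {f : ℂ → ℂ} {z : ℂ} (hf : DifferentiableAt ℝ f z) (v : ℂ) :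
    Dg v (fun t => (f t).im) z = (Dg v f z).im := by
  unfold Dg
  have h := (Complex.imCLM.hasFDerivAt.comp z hf.hasFDerivAt).fderiv
  have h2 : (fun t => (f t).im) = (⇑Complex.imCLM ∘ f) := rfl
  rw [h2, h]; simp

lemma Dg_re {f : ℂ → ℂ} {z : ℂ} (hf : DifferentiableAt ℝ f z) (v : ℂ) :
    Dg v (fun t => (f t).re) z = (Dg v f z).re := by
  unfold Dg
  have h := (Complex.reCLM.hasFDerivAt.comp z hf.hasFDerivAt).fderiv
  have h2 : (fun t => (f t).re) = (⇑Complex.reCLM ∘ f) := rfl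
  rw [h2, h]; simp

lemma Dg_eq_clm_comp {f : ℂ → F} (v : ℂ) :
    Dg v f = (⇑(ContinuousLinearMap.apply ℝ F v)) ∘ (fderiv ℝ f) := rfl

lemma ContDiffAt.dg {f : ℂ → F} {z : ℂ} {m n : WithTop ℕ∞} (hf : ContDiffAt ℝ n f z)
    (hmn : m + 1 ≤ n) (v : ℂ) : ContDiffAt ℝ m (Dg v f) z := by
  rw [Dg_eq_clm_comp]
  exact ((ContinuousLinearMap.apply ℝ F v).contDiff.contDiffAt).comp z (hf.fderiv_right hmn)

lemma Dg_comm {f : ℂ → F} {z : ℂ} {n : WithTop ℕ∞} (hf : ContDiffAt ℝ n f z) (hn : 2 ≤ n)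
    (a b : ℂ) : Dg a (Dg b f) z = Dg b (Dg a f) z := by
  have hd : DifferentiableAt ℝ (fderiv ℝ f) z :=
    (hf.fderiv_right (m := 1) (le_trans (by norm_num) hn)).differentiableAt (by norm_num)
  have key : ∀ c d : ℂ, Dg c (Dg d f) z = fderiv ℝ (fderiv ℝ f) z c d := by
    intro c d
    have h1 : Dg c (Dg d f) z
        = fderiv ℝ ((⇑(ContinuousLinearMap.apply ℝ F d)) ∘ (fderiv ℝ f)) z c := by
      rw [← Dg_eq_clm_comp]; rfl
    rw [h1, ((ContinuousLinearMap.apply ℝ F d).hasFDerivAt.comp z hd.hasFDerivAt).fderiv]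
    rfl
  rw [key, key, (hf.isSymmSndFDerivAt (by simpa [minSmoothness_of_isRCLikeNormedField] using hn)) a b]

lemma dz_eq (w : ℂ → ℂ) (z : ℂ) :
    dz w z = (Dg 1 w z - Complex.I * Dg Complex.I w z) / 2 := rfl

lemma dzb_eq (w : ℂ → ℂ) (z : ℂ) :
    dzb w z = (Dg 1 w z + Complex.I * Dg Complex.I w z) / 2 := rfl

end Kit

lemma DifferentiableAt.cconj {f : ℂ → ℂ} {z : ℂ} (hf : DifferentiableAt ℝ f z) :
    DifferentiableAt ℝ (fun t => (starRingEnd ℂ) (f t)) z :=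
  (Complex.conjCLE.toContinuousLinearMap.differentiable.differentiableAt).comp z hf

lemma DifferentiableAt.ofRealc {r : ℂ → ℝ} {z : ℂ} (hr : DifferentiableAt ℝ r z) :
    DifferentiableAt ℝ (fun t => ((r t : ℝ) : ℂ)) z :=
  (Complex.ofRealCLM.differentiable.differentiableAt).comp z hr

lemma ContDiffAt.cconj {f : ℂ → ℂ} {z : ℂ} {n : WithTop ℕ∞} (hf : ContDiffAt ℝ n f z) :
    ContDiffAt ℝ n (fun t => (starRingEnd ℂ) (f t)) z :=
  (Complex.conjCLE.toContinuousLinearMap.contDiff.contDiffAt).comp z hf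

lemma ContDiffAt.ofRealc {r : ℂ → ℝ} {z : ℂ} {n : WithTop ℕ∞} (hr : ContDiffAt ℝ n r z) :
    ContDiffAt ℝ n (fun t => ((r t : ℝ) : ℂ)) z :=
  (Complex.ofRealCLM.contDiff.contDiffAt).comp z hr

lemma extract_im (Ω : Set ℂ) (hΩ : IsOpen Ω) {f : ℂ → ℂ}
    (hf : ∀ ζ ∈ Ω, ContDiffAt ℝ 2 f ζ) {z : ℂ} (hz : z ∈ Ω) (v : ℂ) :
    Dg v (Dg v (fun ζ => (f ζ).im)) z = (Dg v (Dg v f) z).im := by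
  have h1 : Set.EqOn (Dg v (fun ζ => (f ζ).im)) (fun ζ => (Dg v f ζ).im) Ω :=
    fun ζ hζ => Dg_im ((hf ζ hζ).differentiableAt (by norm_num)) v
  rw [Dg_congr h1 hΩ hz v,
    Dg_im (((hf z hz).dg (m := 1) (by norm_num) v).differentiableAt (by norm_num)) v]

lemma extract_re (Ω : Set ℂ) (hΩ : IsOpen Ω) {f : ℂ → ℂ}
    (hf : ∀ ζ ∈ Ω, ContDiffAt ℝ 2 f ζ) {z : ℂ} (hz : z ∈ Ω) (v : ℂ) :
    Dg v (Dg v (fun ζ => (f ζ).re)) z = (Dg v (Dg v f) z).re := by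
  have h1 : Set.EqOn (Dg v (fun ζ => (f ζ).re)) (fun ζ => (Dg v f ζ).re) Ω :=
    fun ζ hζ => Dg_re ((hf ζ hζ).differentiableAt (by norm_num)) v
  rw [Dg_congr h1 hΩ hz v,
    Dg_re (((hf z hz).dg (m := 1) (by norm_num) v).differentiableAt (by norm_num)) v]

lemma master (Ω : Set ℂ) (hΩ : IsOpen Ω)
    (χ : ℂ → ℝ) (hχ : ContDiffOn ℝ 3 χ Ω)
    (W : ℂ → ℂ) (hW : ContDiffOn ℝ 3 W Ω)
    (hVekua : ∀ z ∈ Ω, dzb W z = dzb (cc χ) z * (starRingEnd ℂ) (W z)) :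
    ∀ z ∈ Ω,
      ContDiffAt ℝ 2 (fun ζ => dz W ζ - dz (cc χ) ζ * (starRingEnd ℂ) (W ζ)) z ∧
      Dg 1 (Dg 1 (fun ζ => dz W ζ - dz (cc χ) ζ * (starRingEnd ℂ) (W ζ))) z
        + Dg Complex.I (Dg Complex.I (fun ζ => dz W ζ - dz (cc χ) ζ * (starRingEnd ℂ) (W ζ))) z
      = (((Dg 1 χ z : ℝ) : ℂ) ^ 2 + ((Dg Complex.I χ z : ℝ) : ℂ) ^ 2)
          * (dz W z - dz (cc χ) z * (starRingEnd ℂ) (W z))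
        - ((((Dg 1 (Dg 1 χ) z : ℝ) : ℂ) - ((Dg Complex.I (Dg Complex.I χ) z : ℝ) : ℂ))
            - Complex.I * (2 * ((Dg 1 (Dg Complex.I χ) z : ℝ) : ℂ)))
          * (starRingEnd ℂ) (dz W z - dz (cc χ) z * (starRingEnd ℂ) (W z)) := by
  have hWa : ∀ ζ ∈ Ω, ContDiffAt ℝ 3 W ζ := fun ζ hζ => hW.contDiffAt (hΩ.mem_nhds hζ)
  have hχa : ∀ ζ ∈ Ω, ContDiffAt ℝ 3 χ ζ := fun ζ hζ => hχ.contDiffAt (hΩ.mem_nhds hζ)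
  have hA1 : ∀ ζ ∈ Ω, ContDiffAt ℝ 2 (Dg (1 : ℂ) W) ζ :=
    fun ζ hζ => (hWa ζ hζ).dg (by norm_num) 1
  have hA2 : ∀ ζ ∈ Ω, ContDiffAt ℝ 2 (Dg Complex.I W) ζ :=
    fun ζ hζ => (hWa ζ hζ).dg (by norm_num) _
  have hAv : ∀ (v : ℂ), ∀ ζ ∈ Ω, ContDiffAt ℝ 2 (Dg v W) ζ :=
    fun v ζ hζ => (hWa ζ hζ).dg (by norm_num) v
  have hp : ∀ ζ ∈ Ω, ContDiffAt ℝ 2 (Dg (1 : ℂ) χ) ζ :=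
    fun ζ hζ => (hχa ζ hζ).dg (by norm_num) _
  have hq : ∀ ζ ∈ Ω, ContDiffAt ℝ 2 (Dg Complex.I χ) ζ :=
    fun ζ hζ => (hχa ζ hζ).dg (by norm_num) _
  have hccd : ∀ (v : ℂ), ∀ ζ ∈ Ω, Dg v (cc χ) ζ = ((Dg v χ ζ : ℝ) : ℂ) := by
    intro v ζ hζ
    exact Dg_ofReal ((hχa ζ hζ).differentiableAt (by norm_num)) v
  -- Vekua equation in directional-derivative form
  have hV : ∀ ζ ∈ Ω, Dg 1 W ζ + Complex.I * Dg Complex.I W ζ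
      = (((Dg 1 χ ζ : ℝ) : ℂ) + Complex.I * ((Dg Complex.I χ ζ : ℝ) : ℂ))
          * (starRingEnd ℂ) (W ζ) := by
    intro ζ hζ
    have h0 := hVekua ζ hζ
    rw [dzb_eq, dzb_eq, hccd 1 ζ hζ, hccd Complex.I ζ hζ] at h0
    linear_combination 2 * h0
  -- first derivatives of the Vekua equation
  have hVd : ∀ (v : ℂ), ∀ z ∈ Ω,
      Dg v (Dg 1 W) z + Complex.I * Dg v (Dg Complex.I W) z
        = (((Dg v (Dg 1 χ) z : ℝ) : ℂ) + Complex.I * ((Dg v (Dg Complex.I χ) z : ℝ) : ℂ))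
            * (starRingEnd ℂ) (W z)
          + (((Dg 1 χ z : ℝ) : ℂ) + Complex.I * ((Dg Complex.I χ z : ℝ) : ℂ))
            * (starRingEnd ℂ) (Dg v W z) := by
    intro v z hz
    have dA1 : DifferentiableAt ℝ (Dg (1 : ℂ) W) z := (hA1 z hz).differentiableAt (by norm_num)
    have dA2 : DifferentiableAt ℝ (Dg Complex.I W) z := (hA2 z hz).differentiableAt (by norm_num)
    have dp' : DifferentiableAt ℝ (Dg (1 : ℂ) χ) z := (hp z hz).differentiableAt (by norm_num)
    have dq' : DifferentiableAt ℝ (Dg Complex.I χ) z := (hq z hz).differentiableAt (by norm_num)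
    have dW' : DifferentiableAt ℝ W z := (hWa z hz).differentiableAt (by norm_num)
    have hc : Dg v (fun t => Dg 1 W t + Complex.I * Dg Complex.I W t) z
        = Dg v (fun t => (((Dg 1 χ t : ℝ) : ℂ) + Complex.I * ((Dg Complex.I χ t : ℝ) : ℂ))
            * (starRingEnd ℂ) (W t)) z :=
      Dg_congr (fun ζ hζ => hV ζ hζ) hΩ hz v
    rw [Dg_add dA1 (dA2.const_mul Complex.I) v, Dg_const_mul dA2,
      Dg_mul (dp'.ofRealc.fun_add (dq'.ofRealc.const_mul Complex.I)) dW'.cconj,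
      Dg_add dp'.ofRealc (dq'.ofRealc.const_mul Complex.I), Dg_const_mul dq'.ofRealc,
      Dg_ofReal dp', Dg_ofReal dq', Dg_conj] at hc
    exact hc
  -- second derivatives of the Vekua equation
  have hE2 : ∀ (w v : ℂ), ∀ z ∈ Ω,
      Dg w (Dg v (Dg 1 W)) z + Complex.I * Dg w (Dg v (Dg Complex.I W)) z
        = (((Dg w (Dg v (Dg 1 χ)) z : ℝ) : ℂ)
              + Complex.I * ((Dg w (Dg v (Dg Complex.I χ)) z : ℝ) : ℂ))
            * (starRingEnd ℂ) (W z)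
          + (((Dg v (Dg 1 χ) z : ℝ) : ℂ) + Complex.I * ((Dg v (Dg Complex.I χ) z : ℝ) : ℂ))
            * (starRingEnd ℂ) (Dg w W z)
          + (((Dg w (Dg 1 χ) z : ℝ) : ℂ) + Complex.I * ((Dg w (Dg Complex.I χ) z : ℝ) : ℂ))
            * (starRingEnd ℂ) (Dg v W z)
          + (((Dg 1 χ z : ℝ) : ℂ) + Complex.I * ((Dg Complex.I χ z : ℝ) : ℂ))
            * (starRingEnd ℂ) (Dg w (Dg v W) z) := by
    intro w v z hz
    have dA1v : DifferentiableAt ℝ (Dg v (Dg (1 : ℂ) W)) z :=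
      ((hA1 z hz).dg (m := 1) (by norm_num) v).differentiableAt (by norm_num)
    have dA2v : DifferentiableAt ℝ (Dg v (Dg Complex.I W)) z :=
      ((hA2 z hz).dg (m := 1) (by norm_num) v).differentiableAt (by norm_num)
    have dpv : DifferentiableAt ℝ (Dg v (Dg (1 : ℂ) χ)) z :=
      ((hp z hz).dg (m := 1) (by norm_num) v).differentiableAt (by norm_num)
    have dqv : DifferentiableAt ℝ (Dg v (Dg Complex.I χ)) z :=
      ((hq z hz).dg (m := 1) (by norm_num) v).differentiableAt (by norm_num)
    have dp' : DifferentiableAt ℝ (Dg (1 : ℂ) χ) z := (hp z hz).differentiableAt (by norm_num)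
    have dq' : DifferentiableAt ℝ (Dg Complex.I χ) z := (hq z hz).differentiableAt (by norm_num)
    have dW' : DifferentiableAt ℝ W z := (hWa z hz).differentiableAt (by norm_num)
    have dWv : DifferentiableAt ℝ (Dg v W) z := (hAv v z hz).differentiableAt (by norm_num)
    have hc : Dg w (fun t => Dg v (Dg 1 W) t + Complex.I * Dg v (Dg Complex.I W) t) z
        = Dg w (fun t =>
            (((Dg v (Dg 1 χ) t : ℝ) : ℂ) + Complex.I * ((Dg v (Dg Complex.I χ) t : ℝ) : ℂ))
              * (starRingEnd ℂ) (W t)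
            + (((Dg 1 χ t : ℝ) : ℂ) + Complex.I * ((Dg Complex.I χ t : ℝ) : ℂ))
              * (starRingEnd ℂ) (Dg v W t)) z :=
      Dg_congr (fun ζ hζ => hVd v ζ hζ) hΩ hz w
    rw [Dg_add dA1v (dA2v.const_mul Complex.I) w, Dg_const_mul dA2v,
      Dg_add ((dpv.ofRealc.fun_add (dqv.ofRealc.const_mul Complex.I)).fun_mul dW'.cconj)
        ((dp'.ofRealc.fun_add (dq'.ofRealc.const_mul Complex.I)).fun_mul dWv.cconj),
      Dg_mul (dpv.ofRealc.fun_add (dqv.ofRealc.const_mul Complex.I)) dW'.cconj,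
      Dg_mul (dp'.ofRealc.fun_add (dq'.ofRealc.const_mul Complex.I)) dWv.cconj,
      Dg_add dpv.ofRealc (dqv.ofRealc.const_mul Complex.I), Dg_const_mul dqv.ofRealc,
      Dg_add dp'.ofRealc (dq'.ofRealc.const_mul Complex.I), Dg_const_mul dq'.ofRealc,
      Dg_ofReal dpv, Dg_ofReal dqv, Dg_ofReal dp', Dg_ofReal dq', Dg_conj, Dg_conj] at hc
    linear_combination hc
  -- u agrees on Ω with its expanded form
  have hu : ∀ ζ ∈ Ω, dz W ζ - dz (cc χ) ζ * (starRingEnd ℂ) (W ζ)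
      = (Dg 1 W ζ - Complex.I * Dg Complex.I W ζ
          - (((Dg 1 χ ζ : ℝ) : ℂ) - Complex.I * ((Dg Complex.I χ ζ : ℝ) : ℂ))
            * (starRingEnd ℂ) (W ζ)) / 2 := by
    intro ζ hζ
    rw [dz_eq, dz_eq, hccd 1 ζ hζ, hccd Complex.I ζ hζ]
    ring
  intro z hz
  have hu2 : ∀ ζ ∈ Ω, ContDiffAt ℝ 2
      (fun ζ => dz W ζ - dz (cc χ) ζ * (starRingEnd ℂ) (W ζ)) ζ := by
    intro ζ hζ
    have h1 : ContDiffAt ℝ 2 (fun t => (Dg 1 W t - Complex.I * Dg Complex.I W t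
        - (((Dg 1 χ t : ℝ) : ℂ) - Complex.I * ((Dg Complex.I χ t : ℝ) : ℂ))
          * (starRingEnd ℂ) (W t)) / 2) ζ := by
      exact (((hA1 ζ hζ).sub (contDiffAt_const.mul (hA2 ζ hζ))).sub
        (((hp ζ hζ).ofRealc.sub (contDiffAt_const.mul (hq ζ hζ).ofRealc)).mul
          ((hWa ζ hζ).of_le (by norm_num)).cconj)).div_const 2
    exact h1.congr_of_eventuallyEq
      (Filter.eventuallyEq_of_mem (hΩ.mem_nhds hζ) (fun ξ hξ => hu ξ hξ))
  -- first derivatives of u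
  have hud : ∀ (v : ℂ), ∀ ζ ∈ Ω,
      Dg v (fun t => (Dg 1 W t - Complex.I * Dg Complex.I W t
          - (((Dg 1 χ t : ℝ) : ℂ) - Complex.I * ((Dg Complex.I χ t : ℝ) : ℂ))
            * (starRingEnd ℂ) (W t)) / 2) ζ
        = (Dg v (Dg 1 W) ζ - Complex.I * Dg v (Dg Complex.I W) ζ
          - (((Dg v (Dg 1 χ) ζ : ℝ) : ℂ) - Complex.I * ((Dg v (Dg Complex.I χ) ζ : ℝ) : ℂ))
            * (starRingEnd ℂ) (W ζ)
          - (((Dg 1 χ ζ : ℝ) : ℂ) - Complex.I * ((Dg Complex.I χ ζ : ℝ) : ℂ))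
            * (starRingEnd ℂ) (Dg v W ζ)) / 2 := by
    intro v ζ hζ
    have dA1 : DifferentiableAt ℝ (Dg (1 : ℂ) W) ζ := (hA1 ζ hζ).differentiableAt (by norm_num)
    have dA2 : DifferentiableAt ℝ (Dg Complex.I W) ζ := (hA2 ζ hζ).differentiableAt (by norm_num)
    have dp' : DifferentiableAt ℝ (Dg (1 : ℂ) χ) ζ := (hp ζ hζ).differentiableAt (by norm_num)
    have dq' : DifferentiableAt ℝ (Dg Complex.I χ) ζ := (hq ζ hζ).differentiableAt (by norm_num)
    have dW' : DifferentiableAt ℝ W ζ := (hWa ζ hζ).differentiableAt (by norm_num)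
    have dc1 : DifferentiableAt ℝ (fun t => ((Dg 1 χ t : ℝ) : ℂ)
        - Complex.I * ((Dg Complex.I χ t : ℝ) : ℂ)) ζ :=
      dp'.ofRealc.sub (dq'.ofRealc.const_mul Complex.I)
    rw [Dg_div_const ((dA1.fun_sub (dA2.const_mul Complex.I)).fun_sub (dc1.fun_mul dW'.cconj)),
      Dg_sub (dA1.fun_sub (dA2.const_mul Complex.I)) (dc1.fun_mul dW'.cconj),
      Dg_sub dA1 (dA2.const_mul Complex.I), Dg_const_mul dA2,
      Dg_mul dc1 dW'.cconj,
      Dg_sub dp'.ofRealc (dq'.ofRealc.const_mul Complex.I), Dg_const_mul dq'.ofRealc,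
      Dg_ofReal dp', Dg_ofReal dq', Dg_conj]
    ring
  -- second derivatives of u
  have hudd : ∀ (w v : ℂ), ∀ z ∈ Ω,
      Dg w (fun t => (Dg v (Dg 1 W) t - Complex.I * Dg v (Dg Complex.I W) t
          - (((Dg v (Dg 1 χ) t : ℝ) : ℂ) - Complex.I * ((Dg v (Dg Complex.I χ) t : ℝ) : ℂ))
            * (starRingEnd ℂ) (W t)
          - (((Dg 1 χ t : ℝ) : ℂ) - Complex.I * ((Dg Complex.I χ t : ℝ) : ℂ))
            * (starRingEnd ℂ) (Dg v W t)) / 2) z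
        = (Dg w (Dg v (Dg 1 W)) z - Complex.I * Dg w (Dg v (Dg Complex.I W)) z
          - (((Dg w (Dg v (Dg 1 χ)) z : ℝ) : ℂ)
              - Complex.I * ((Dg w (Dg v (Dg Complex.I χ)) z : ℝ) : ℂ))
            * (starRingEnd ℂ) (W z)
          - (((Dg v (Dg 1 χ) z : ℝ) : ℂ) - Complex.I * ((Dg v (Dg Complex.I χ) z : ℝ) : ℂ))
            * (starRingEnd ℂ) (Dg w W z)
          - (((Dg w (Dg 1 χ) z : ℝ) : ℂ) - Complex.I * ((Dg w (Dg Complex.I χ) z : ℝ) : ℂ))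
            * (starRingEnd ℂ) (Dg v W z)
          - (((Dg 1 χ z : ℝ) : ℂ) - Complex.I * ((Dg Complex.I χ z : ℝ) : ℂ))
            * (starRingEnd ℂ) (Dg w (Dg v W) z)) / 2 := by
    intro w v z hz
    have dA1v : DifferentiableAt ℝ (Dg v (Dg (1 : ℂ) W)) z :=
      ((hA1 z hz).dg (m := 1) (by norm_num) v).differentiableAt (by norm_num)
    have dA2v : DifferentiableAt ℝ (Dg v (Dg Complex.I W)) z :=
      ((hA2 z hz).dg (m := 1) (by norm_num) v).differentiableAt (by norm_num)
    have dpv : DifferentiableAt ℝ (Dg v (Dg (1 : ℂ) χ)) z :=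
      ((hp z hz).dg (m := 1) (by norm_num) v).differentiableAt (by norm_num)
    have dqv : DifferentiableAt ℝ (Dg v (Dg Complex.I χ)) z :=
      ((hq z hz).dg (m := 1) (by norm_num) v).differentiableAt (by norm_num)
    have dp' : DifferentiableAt ℝ (Dg (1 : ℂ) χ) z := (hp z hz).differentiableAt (by norm_num)
    have dq' : DifferentiableAt ℝ (Dg Complex.I χ) z := (hq z hz).differentiableAt (by norm_num)
    have dW' : DifferentiableAt ℝ W z := (hWa z hz).differentiableAt (by norm_num)
    have dWv : DifferentiableAt ℝ (Dg v W) z := (hAv v z hz).differentiableAt (by norm_num)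
    have dc1 : DifferentiableAt ℝ (fun t => ((Dg v (Dg 1 χ) t : ℝ) : ℂ)
        - Complex.I * ((Dg v (Dg Complex.I χ) t : ℝ) : ℂ)) z :=
      dpv.ofRealc.sub (dqv.ofRealc.const_mul Complex.I)
    have dc2 : DifferentiableAt ℝ (fun t => ((Dg 1 χ t : ℝ) : ℂ)
        - Complex.I * ((Dg Complex.I χ t : ℝ) : ℂ)) z :=
      dp'.ofRealc.sub (dq'.ofRealc.const_mul Complex.I)
    rw [Dg_div_const (((dA1v.fun_sub (dA2v.const_mul Complex.I)).fun_sub (dc1.fun_mul dW'.cconj)).fun_sub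
        (dc2.fun_mul dWv.cconj)),
      Dg_sub ((dA1v.fun_sub (dA2v.const_mul Complex.I)).fun_sub (dc1.fun_mul dW'.cconj)) (dc2.fun_mul dWv.cconj),
      Dg_sub (dA1v.fun_sub (dA2v.const_mul Complex.I)) (dc1.fun_mul dW'.cconj),
      Dg_sub dA1v (dA2v.const_mul Complex.I), Dg_const_mul dA2v,
      Dg_mul dc1 dW'.cconj, Dg_mul dc2 dWv.cconj,
      Dg_sub dpv.ofRealc (dqv.ofRealc.const_mul Complex.I), Dg_const_mul dqv.ofRealc,
      Dg_sub dp'.ofRealc (dq'.ofRealc.const_mul Complex.I), Dg_const_mul dq'.ofRealc,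
      Dg_ofReal dpv, Dg_ofReal dqv, Dg_ofReal dp', Dg_ofReal dq', Dg_conj, Dg_conj]
    ring
  -- symmetry of second derivatives
  have hMsym : ∀ ζ ∈ Ω, Dg Complex.I (Dg 1 W) ζ = Dg 1 (Dg Complex.I W) ζ :=
    fun ζ hζ => Dg_comm (hWa ζ hζ) (by norm_num) Complex.I 1
  have hχsym : ∀ ζ ∈ Ω, Dg Complex.I (Dg 1 χ) ζ = Dg 1 (Dg Complex.I χ) ζ :=
    fun ζ hζ => Dg_comm (hχa ζ hζ) (by norm_num) Complex.I 1
  have hs3a : Dg Complex.I (Dg 1 (Dg 1 W)) z = Dg 1 (Dg 1 (Dg Complex.I W)) z := by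
    have h1 := Dg_comm (hA1 z hz) le_rfl Complex.I 1
    have h2 : Dg 1 (Dg Complex.I (Dg 1 W)) z = Dg 1 (Dg 1 (Dg Complex.I W)) z :=
      Dg_congr (fun ζ hζ => hMsym ζ hζ) hΩ hz 1
    exact h1.trans h2
  have hs3b : Dg Complex.I (Dg 1 (Dg Complex.I W)) z
      = Dg Complex.I (Dg Complex.I (Dg 1 W)) z :=
    Dg_congr (fun ζ hζ => (hMsym ζ hζ).symm) hΩ hz Complex.I
  have hs2 : Dg Complex.I (Dg 1 W) z = Dg 1 (Dg Complex.I W) z := hMsym z hz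
  have hc3a : Dg Complex.I (Dg 1 (Dg 1 χ)) z = Dg 1 (Dg 1 (Dg Complex.I χ)) z := by
    have h1 := Dg_comm (hp z hz) le_rfl Complex.I 1
    have h2 : Dg 1 (Dg Complex.I (Dg 1 χ)) z = Dg 1 (Dg 1 (Dg Complex.I χ)) z :=
      Dg_congr (fun ζ hζ => hχsym ζ hζ) hΩ hz 1
    exact h1.trans h2
  have hc3b : Dg Complex.I (Dg 1 (Dg Complex.I χ)) z
      = Dg Complex.I (Dg Complex.I (Dg 1 χ)) z :=
    Dg_congr (fun ζ hζ => (hχsym ζ hζ).symm) hΩ hz Complex.I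
  have hc2 : Dg Complex.I (Dg 1 χ) z = Dg 1 (Dg Complex.I χ) z := hχsym z hz
  refine ⟨hu2 z hz, ?_⟩
  -- rewrite the Laplacian of u
  have hQ1 : Dg 1 (Dg 1 (fun ζ => dz W ζ - dz (cc χ) ζ * (starRingEnd ℂ) (W ζ))) z
      = Dg 1 (fun t => (Dg 1 (Dg 1 W) t - Complex.I * Dg 1 (Dg Complex.I W) t
          - (((Dg 1 (Dg 1 χ) t : ℝ) : ℂ) - Complex.I * ((Dg 1 (Dg Complex.I χ) t : ℝ) : ℂ))
            * (starRingEnd ℂ) (W t)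
          - (((Dg 1 χ t : ℝ) : ℂ) - Complex.I * ((Dg Complex.I χ t : ℝ) : ℂ))
            * (starRingEnd ℂ) (Dg 1 W t)) / 2) z := by
    apply Dg_congr _ hΩ hz 1
    intro ζ hζ
    have e1 := Dg_congr (fun ξ hξ => hu ξ hξ) hΩ hζ (1 : ℂ)
    exact e1.trans (hud 1 ζ hζ)
  have hQ2 : Dg Complex.I (Dg Complex.I
        (fun ζ => dz W ζ - dz (cc χ) ζ * (starRingEnd ℂ) (W ζ))) z
      = Dg Complex.I (fun t => (Dg Complex.I (Dg 1 W) t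
          - Complex.I * Dg Complex.I (Dg Complex.I W) t
          - (((Dg Complex.I (Dg 1 χ) t : ℝ) : ℂ)
              - Complex.I * ((Dg Complex.I (Dg Complex.I χ) t : ℝ) : ℂ))
            * (starRingEnd ℂ) (W t)
          - (((Dg 1 χ t : ℝ) : ℂ) - Complex.I * ((Dg Complex.I χ t : ℝ) : ℂ))
            * (starRingEnd ℂ) (Dg Complex.I W t)) / 2) z := by
    apply Dg_congr _ hΩ hz Complex.I
    intro ζ hζ
    have e1 := Dg_congr (fun ξ hξ => hu ξ hξ) hΩ hζ Complex.I
    exact e1.trans (hud Complex.I ζ hζ)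
  rw [hQ1, hQ2, hudd 1 1 z hz, hudd Complex.I Complex.I z hz, hu z hz]
  -- collect the differentiated Vekua identities
  have hV0 := hV z hz
  have hVx := hVd 1 z hz
  have hVy := hVd Complex.I z hz
  have hE11 := hE2 1 1 z hz
  have hE21 := hE2 Complex.I 1 z hz
  have hE22 := hE2 Complex.I Complex.I z hz
  rw [hs2, hc2] at hVy
  rw [hs3a, hs3b, hc3a, hc3b, hs2, hc2] at hE21
  rw [hc2] at hE22
  rw [hc2]
  -- conjugated identities
  have hV0c := congrArg (starRingEnd ℂ) hV0
  have hVxc := congrArg (starRingEnd ℂ) hVx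
  have hVyc := congrArg (starRingEnd ℂ) hVy
  simp only [map_add, map_sub, map_mul, Complex.conj_conj, Complex.conj_I,
    Complex.conj_ofReal] at hV0c hVxc hVyc
  simp only [map_sub, map_add, map_mul, map_div₀, Complex.conj_conj, Complex.conj_I,
    Complex.conj_ofReal, map_ofNat]
  linear_combination (1 / 2 : ℂ) * hE11 - Complex.I * hE21 - (1 / 2 : ℂ) * hE22
    + ((((Dg 1 (Dg 1 χ) z : ℝ) : ℂ) + ((Dg Complex.I (Dg Complex.I χ) z : ℝ) : ℂ)) / 2) * hV0c
    + Complex.I * ((Dg Complex.I χ z : ℝ) : ℂ) * hVxc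
    - Complex.I * ((Dg 1 χ z : ℝ) : ℂ) * hVyc
    - ((((Dg 1 χ z : ℝ) : ℂ) - Complex.I * ((Dg Complex.I χ z : ℝ) : ℂ)) ^ 2 / 2) * hV0
    + ((starRingEnd ℂ) (W z) * ((Dg 1 χ z : ℝ) : ℂ) * ((Dg Complex.I χ z : ℝ) : ℂ) ^ 2 * (1 / 2)
      - (starRingEnd ℂ) (W z) * ((Dg Complex.I (Dg Complex.I (Dg 1 χ)) z : ℝ) : ℂ)
      - ((Dg 1 (Dg Complex.I χ) z : ℝ) : ℂ) * (starRingEnd ℂ) (Dg Complex.I W z) * 2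
      - (starRingEnd ℂ) (Dg 1 W z) * ((Dg Complex.I (Dg Complex.I χ) z : ℝ) : ℂ)
      + ((Dg 1 χ z : ℝ) : ℂ) * ((Dg Complex.I (Dg Complex.I χ) z : ℝ) : ℂ) * W z
      - ((Dg 1 χ z : ℝ) : ℂ) * (starRingEnd ℂ) (Dg Complex.I (Dg Complex.I W) z)
      - ((Dg Complex.I χ z : ℝ) : ℂ) ^ 2 * Dg 1 W z * (1 / 2)
      + Dg Complex.I (Dg Complex.I (Dg 1 W)) z
      + Complex.I * ((starRingEnd ℂ) (W z) * ((Dg Complex.I χ z : ℝ) : ℂ) ^ 3 * (-1 / 2)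
          + ((Dg Complex.I χ z : ℝ) : ℂ) ^ 2 * Dg Complex.I W z * (1 / 2))) * Complex.I_sq

/-- Φ = (Im W̊, Re W̊)ᵀ is in the kernel of the matrix Hamiltonian H^{(1)}. -/
theorem matrix_ground_state (Ω : Set ℂ) (hΩ : IsOpen Ω)
    (χ : ℂ → ℝ) (hχ : ContDiffOn ℝ 3 χ Ω)
    (W : ℂ → ℂ) (hW : ContDiffOn ℝ 3 W Ω)
    (hVekua : ∀ z ∈ Ω, dzb W z = dzb (cc χ) z * (starRingEnd ℂ) (W z)) :
    ∀ z ∈ Ω, ∀ i : Fin 2,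
      (∑ j : Fin 2,
        H1c χ i j
          (fun ζ => if j = 0 then (dz W ζ - dz (cc χ) ζ * (starRingEnd ℂ) (W ζ)).im
                    else (dz W ζ - dz (cc χ) ζ * (starRingEnd ℂ) (W ζ)).re) z) = 0 := by
  intro z hz i
  have hm := master Ω hΩ χ hχ W hW hVekua
  have hu2 : ∀ ζ ∈ Ω, ContDiffAt ℝ 2
      (fun ζ => dz W ζ - dz (cc χ) ζ * (starRingEnd ℂ) (W ζ)) ζ := fun ζ hζ => (hm ζ hζ).1
  obtain ⟨-, key⟩ := hm z hz
  have hIm1 := extract_im Ω hΩ hu2 hz (1 : ℂ)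
  have hImI := extract_im Ω hΩ hu2 hz Complex.I
  have hRe1 := extract_re Ω hΩ hu2 hz (1 : ℂ)
  have hReI := extract_re Ω hΩ hu2 hz Complex.I
  have hc2 : Dg Complex.I (Dg 1 χ) z = Dg 1 (Dg Complex.I χ) z :=
    Dg_comm (hχ.contDiffAt (hΩ.mem_nhds hz)) (by norm_num) Complex.I 1
  have kim := congrArg Complex.im key
  have kre := congrArg Complex.re key
  simp only [Complex.add_im, Complex.add_re, Complex.sub_im, Complex.sub_re, Complex.mul_im,
    Complex.mul_re, Complex.I_re, Complex.I_im, Complex.ofReal_re, Complex.ofReal_im,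
    Complex.conj_re, Complex.conj_im, ← Complex.ofReal_pow, Complex.re_ofNat,
    Complex.im_ofNat] at kim kre
  have e0 : pdc 0 = Dg (1 : ℂ) := rfl
  have e1 : pdc 1 = Dg Complex.I := rfl
  fin_cases i
  · simp only [Fin.sum_univ_two, H1c, H0c, Fin.mk_zero, Fin.mk_one, Fin.isValue, reduceIte, one_ne_zero, zero_ne_one, if_true, if_false, e0, e1]
    rw [hIm1, hImI]
    simp only [Complex.sub_im, Complex.sub_re, Complex.mul_im, Complex.mul_re,
      Complex.conj_re, Complex.conj_im]
    linear_combination -kim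
  · simp only [Fin.sum_univ_two, H1c, H0c, Fin.mk_zero, Fin.mk_one, Fin.isValue, reduceIte, one_ne_zero, zero_ne_one, if_true, if_false, e0, e1]
    rw [hRe1, hReI]
    simp only [Complex.sub_im, Complex.sub_re, Complex.mul_im, Complex.mul_re,
      Complex.conj_re, Complex.conj_im]
    linear_combination -kre + 2 * ((dz W z).im
      - (-((dz (cc χ) z).re * (W z).im) + (dz (cc χ) z).im * (W z).re)) * hc2
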